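/- If F = f + g with f differentiable and convex, g convex, F attains its minimum F* on a set 𝒳*, and F satisfies quadratic growth F(x) − F* ≥ (μ/2)‖x − x_p‖² (x_p the projection of x onto 𝒳*), then for every λ with 0 < λ < μ, D_g(x, λ) ≥ 2λ(1 − λ/μ)(F(x) − F*); in particular D_g(x, μ/2) ≥ (μ/2)(F(x) − F*). -/

import Mathlib

open RealInnerProductSpace

/-- The quantity `D_g(x, λ)` from the proximal-PL inequality. -/
noncomputable def Dg {d : ℕ} (f g : EuclideanSpace ℝ (Fin d) → ℝ)
    (x : EuclideanSpace ℝ (Fin d)) (lam : ℝ) : ℝ :=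
  -2 * lam * ⨅ y : EuclideanSpace ℝ (Fin d),
    (⟪gradient f x, y - x⟫ + lam / 2 * ‖y - x‖ ^ 2 + g y - g x)

section Aux

variable {d : ℕ}

local notation "E" => EuclideanSpace ℝ (Fin d)

/-- Gradient inequality for convex differentiable functions. -/
lemma grad_ineq (f : E → ℝ) (hdiff : Differentiable ℝ f)
    (hfconv : ConvexOn ℝ Set.univ f) (x y : E) :
    f x + ⟪gradient f x, y - x⟫ ≤ f y := by
  set φ : ℝ → ℝ := fun t => f (x + t • (y - x)) with hφ
  have hA : ConvexOn ℝ Set.univ φ := by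
    have h := (hfconv.comp_affineMap (AffineMap.lineMap x y : ℝ →ᵃ[ℝ] E)).subset
      (by simp) convex_univ
    have heq : φ = f ∘ (AffineMap.lineMap x y : ℝ →ᵃ[ℝ] E) := by
      funext t
      simp [φ, Function.comp, AffineMap.lineMap_apply_module', add_comm]
    rwa [heq]
  have hderiv : HasDerivAt φ (fderiv ℝ f x (y - x)) 0 := by
    have h1 : HasDerivAt (fun t : ℝ => x + t • (y - x)) (y - x) 0 := by
      simpa using ((hasDerivAt_id (0:ℝ)).smul_const (y - x)).const_add x
    have h2 : HasFDerivAt f (fderiv ℝ f x) (x + (0:ℝ) • (y - x)) := by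
      simpa using (hdiff x).hasFDerivAt
    exact h2.comp_hasDerivAt 0 h1
  have hslope := hA.le_slope_of_hasDerivAt (Set.mem_univ 0) (Set.mem_univ 1)
    one_pos hderiv
  have hgrad : ⟪gradient f x, y - x⟫ = fderiv ℝ f x (y - x) := by
    rw [gradient, InnerProductSpace.toDual_symm_apply]
  rw [slope_def_field] at hslope
  simp only [φ] at hslope
  simp only [one_smul, zero_smul, add_zero, add_sub_cancel] at hslope
  rw [hgrad]
  linarith [hslope]

/-- Existence of a subgradient (as a continuous linear functional) for a convex
function on Euclidean space. -/
lemma exists_subgrad (g : E → ℝ) (hgconv : ConvexOn ℝ Set.univ g) (x : E) :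
    ∃ φ : E →L[ℝ] ℝ, ∀ y, g x + φ (y - x) ≤ g y := by
  have hgc : Continuous g := by
    rw [← continuousOn_univ]; exact hgconv.continuousOn isOpen_univ
  set T : Set (E × ℝ) := {p | g p.1 < p.2} with hT
  have hTconv : Convex ℝ T := by
    have := hgconv.convex_strict_epigraph
    simpa [T] using this
  have hTopen : IsOpen T := isOpen_lt (hgc.comp continuous_fst) continuous_snd
  have hxT : (x, g x) ∉ T := by simp [T]
  obtain ⟨ψ, hψ⟩ := geometric_hahn_banach_point_open hTconv hTopen hxT
  set c : ℝ := ψ (0, 1) with hc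
  have hdecomp : ∀ (y : E) (t : ℝ), ψ (y, t) = ψ (y, 0) + t * c := by
    intro y t
    have : (y, t) = (y, (0:ℝ)) + t • ((0:E), (1:ℝ)) := by
      simp [Prod.ext_iff]
    rw [this, map_add, map_smul]
    simp [hc, smul_eq_mul]
  have hcpos : 0 < c := by
    have := hψ (x, g x + 1) (by simp [T])
    rw [hdecomp x (g x + 1), hdecomp x (g x)] at this
    linarith
  refine ⟨-(c⁻¹) • (ψ.comp (ContinuousLinearMap.inl ℝ E ℝ)), fun y => ?_⟩
  have key : ψ (x, 0) + g x * c ≤ ψ (y, 0) + g y * c := by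
    have h1 : ∀ ε > (0:ℝ), ψ (x, 0) + g x * c < ψ (y, 0) + g y * c + ε := by
      intro ε hε
      have := hψ (y, g y + ε / c) (by simp [T]; positivity)
      rw [hdecomp y _, hdecomp x _] at this
      have : ψ (x, 0) + g x * c < ψ (y, 0) + (g y + ε / c) * c := this
      have hc0 : c ≠ 0 := ne_of_gt hcpos
      field_simp at this
      nlinarith
    linarith [le_of_forall_pos_lt_add h1]
  have happ : (-(c⁻¹) • (ψ.comp (ContinuousLinearMap.inl ℝ E ℝ))) (y - x)
      = -(c⁻¹) * (ψ (y - x, 0)) := by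
    simp [ContinuousLinearMap.smul_apply]
  rw [happ]
  have hlin : ψ (y - x, 0) = ψ (y, 0) - ψ (x, 0) := by
    have : ((y - x : E), (0:ℝ)) = (y, (0:ℝ)) - (x, (0:ℝ)) := by simp [Prod.ext_iff]
    rw [this, map_sub]
  rw [hlin]
  have hc0 : c ≠ 0 := ne_of_gt hcpos
  have h2 : (ψ (x, 0) - ψ (y, 0)) / c ≤ g y - g x := by
    rw [div_le_iff₀ hcpos]; nlinarith [key]
  have h3 : -c⁻¹ * (ψ (y, 0) - ψ (x, 0)) = (ψ (x, 0) - ψ (y, 0)) / c := by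
    field_simp; ring
  linarith

end Aux

lemma bdd_below_aux (f g : EuclideanSpace ℝ (Fin d) → ℝ)
    (hdiff : Differentiable ℝ f) (hgconv : ConvexOn ℝ Set.univ g)
    (lam : ℝ) (hlam : 0 < lam) (x : EuclideanSpace ℝ (Fin d)) :
    BddBelow (Set.range fun y : EuclideanSpace ℝ (Fin d) =>
      (⟪gradient f x, y - x⟫ + lam / 2 * ‖y - x‖ ^ 2 + g y - g x)) := by
  obtain ⟨φ, hφ⟩ := exists_subgrad g hgconv x
  have quad : ∀ a r : ℝ, 0 ≤ a → 0 ≤ r → -(a ^ 2) / (2 * lam) ≤ lam / 2 * r ^ 2 - a * r := by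
    intro a r ha hr
    rw [div_le_iff₀ (by positivity)]
    nlinarith [sq_nonneg (lam * r - a)]
  refine ⟨-((‖gradient f x‖ + ‖φ‖) ^ 2) / (2 * lam), ?_⟩
  rintro _ ⟨y, rfl⟩
  have h1 : -(‖gradient f x‖ * ‖y - x‖) ≤ ⟪gradient f x, y - x⟫ := by
    have := abs_real_inner_le_norm (gradient f x) (y - x)
    linarith [neg_abs_le (⟪gradient f x, y - x⟫ : ℝ)]
  have h2 : -(‖φ‖ * ‖y - x‖) ≤ g y - g x := by
    have h := φ.le_opNorm (y - x)
    have habs : |φ (y - x)| ≤ ‖φ‖ * ‖y - x‖ := by simpa [Real.norm_eq_abs] using h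
    have := hφ y
    linarith [neg_abs_le (φ (y - x))]
  have hk := quad (‖gradient f x‖ + ‖φ‖) ‖y - x‖ (by positivity) (norm_nonneg _)
  simp only []
  nlinarith [hk]


theorem qg_convex_implies_proxPL
    {d : ℕ} (f g : EuclideanSpace ℝ (Fin d) → ℝ) (μ Fstar : ℝ) (hμ : 0 < μ)
    (hdiff : Differentiable ℝ f)
    (hfconv : ConvexOn ℝ Set.univ f) (hgconv : ConvexOn ℝ Set.univ g)
    (S : Set (EuclideanSpace ℝ (Fin d)))
    (hS : S = {z | ∀ y, f z + g z ≤ f y + g y}) (hSne : S.Nonempty)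
    (hFstar : ∀ z ∈ S, f z + g z = Fstar)
    (p : EuclideanSpace ℝ (Fin d) → EuclideanSpace ℝ (Fin d))
    (hproj : ∀ x, p x ∈ S ∧ ∀ y ∈ S, ‖x - p x‖ ≤ ‖x - y‖)
    (hQG : ∀ x, μ / 2 * ‖x - p x‖ ^ 2 ≤ f x + g x - Fstar) :
    (∀ lam : ℝ, 0 < lam → lam < μ →
        ∀ x, 2 * lam * (1 - lam / μ) * (f x + g x - Fstar) ≤ Dg f g x lam)
      ∧ ∀ x, μ / 2 * (f x + g x - Fstar) ≤ Dg f g x (μ / 2) := by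
  have key : ∀ lam : ℝ, 0 < lam → lam < μ →
      ∀ x, 2 * lam * (1 - lam / μ) * (f x + g x - Fstar) ≤ Dg f g x lam := by
    intro lam hlam hlamμ x
    have hpx : p x ∈ S := (hproj x).1
    have hpmin : ∀ y, f (p x) + g (p x) ≤ f y + g y := by
      rw [hS] at hpx; exact hpx
    have hpF : f (p x) + g (p x) = Fstar := hFstar _ hpx
    have hΔ : 0 ≤ f x + g x - Fstar := by
      have := hpmin x; linarith
    -- value at y = p x
    have hfg : f x + ⟪gradient f x, p x - x⟫ ≤ f (p x) :=
      grad_ineq f hdiff hfconv x (p x)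
    have hqg := hQG x
    have hnorm : ‖p x - x‖ = ‖x - p x‖ := norm_sub_rev _ _
    have hVal : ⟪gradient f x, p x - x⟫ + lam / 2 * ‖p x - x‖ ^ 2 + g (p x) - g x
        ≤ -(f x + g x - Fstar) + lam / μ * (f x + g x - Fstar) := by
      have h2 : lam / 2 * ‖p x - x‖ ^ 2 ≤ lam / μ * (f x + g x - Fstar) := by
        rw [hnorm]
        have : lam / 2 * ‖x - p x‖ ^ 2 = (lam / μ) * (μ / 2 * ‖x - p x‖ ^ 2) := by
          field_simp
        rw [this]
        have hlm : 0 ≤ lam / μ := by positivity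
        exact mul_le_mul_of_nonneg_left hqg hlm
      linarith
    have hinf : (⨅ y : EuclideanSpace ℝ (Fin d),
        (⟪gradient f x, y - x⟫ + lam / 2 * ‖y - x‖ ^ 2 + g y - g x))
        ≤ ⟪gradient f x, p x - x⟫ + lam / 2 * ‖p x - x‖ ^ 2 + g (p x) - g x :=
      ciInf_le (bdd_below_aux f g hdiff hgconv lam hlam x) (p x)
    have hInfle : (⨅ y : EuclideanSpace ℝ (Fin d),
        (⟪gradient f x, y - x⟫ + lam / 2 * ‖y - x‖ ^ 2 + g y - g x))
        ≤ -(f x + g x - Fstar) + lam / μ * (f x + g x - Fstar) := le_trans hinf hVal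
    rw [Dg]
    have hμ0 : μ ≠ 0 := ne_of_gt hμ
    have h2l : (0:ℝ) < 2 * lam := by linarith
    have := mul_le_mul_of_nonneg_left hInfle (le_of_lt h2l)
    have hid : 2 * lam * (1 - lam / μ) * (f x + g x - Fstar)
        = -2 * lam * (-(f x + g x - Fstar) + lam / μ * (f x + g x - Fstar)) := by
      field_simp; ring
    rw [hid]
    nlinarith [this]
  refine ⟨key, fun x => ?_⟩
  have h := key (μ / 2) (by positivity) (by linarith) x
  have : 2 * (μ / 2) * (1 - μ / 2 / μ) = μ / 2 := by
    field_simp; ring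
  rw [this] at h
  exact h
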